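/- Let d ≥ 2 be an integer and α ∈ (0,2). For x ∈ ℝ^d with |x| ≠ 1 define j(x) = 𝒜 ∫_{ℝ^d} (𝟙_{B₁}(x) − 𝟙_{B₁}(x−y)) |y|^{−d−α} dy, where 𝟙_{B₁} is the indicator of the unit ball B₁ centered at the origin (the integral converges absolutely for |x| ≠ 1). Then j depends only on r = |x|; j(r) > 0 for r ∈ (0,1) and j(r) < 0 for r ∈ (1,∞); and j is an increasing function of r on (0,1) and on (1,∞). -/

import Mathlib

open MeasureTheory Real

/-- The normalizing constant `𝒜(d,α)` of the fractional Laplacian. -/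
noncomputable def fracLapConst (d : ℕ) (α : ℝ) : ℝ :=
  2 ^ α * Gamma (((d : ℝ) + α) / 2) / (π ^ ((d : ℝ) / 2) * |Gamma (-α / 2)|)

open MeasureTheory Real Metric Set Function
open scoped RealInnerProductSpace

namespace FracLapAux

variable {n : ℕ}

local notation "Ed" => EuclideanSpace ℝ (Fin n)

lemma lt_of_sq_lt_sq {a b : ℝ} (hb : 0 ≤ b) (h : a^2 < b^2) : a < b := by nlinarith

/-- Reflection across the hyperplane orthogonal to a unit vector `v`. -/
noncomputable def reflV (v : Ed) (hv : ‖v‖ = 1) : Ed ≃ₗᵢ[ℝ] Ed where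
  toLinearEquiv := LinearEquiv.ofInvolutive
    { toFun := fun z => z - (2 * ⟪z, v⟫) • v
      map_add' := fun a b => by
        simp only [inner_add_left]
        module
      map_smul' := fun c a => by
        simp only [real_inner_smul_left, RingHom.id_apply]
        module }
    (fun z => by
      have hvv : ⟪v, v⟫ = 1 := by
        rw [real_inner_self_eq_norm_sq, hv]; norm_num
      simp only [LinearMap.coe_mk, AddHom.coe_mk, inner_sub_left, real_inner_smul_left, hvv]
      module)
  norm_map' := fun z => by
    have hvv : ⟪v, v⟫ = 1 := by
      rw [real_inner_self_eq_norm_sq, hv]; norm_num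
    have h : ‖z - (2 * ⟪z, v⟫) • v‖^2 = ‖z‖^2 := by
      rw [norm_sub_sq_real, real_inner_smul_right]
      have hnv : ‖(2 * ⟪z, v⟫) • v‖^2 = (2 * ⟪z, v⟫)^2 := by
        rw [norm_smul, hv, mul_one, Real.norm_eq_abs, sq_abs]
      rw [hnv]; ring
    calc ‖z - (2 * ⟪z, v⟫) • v‖ = √(‖z - (2 * ⟪z, v⟫) • v‖^2) :=
          (Real.sqrt_sq (norm_nonneg _)).symm
    _ = √(‖z‖^2) := by rw [h]
    _ = ‖z‖ := Real.sqrt_sq (norm_nonneg _)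

lemma reflV_apply (v : Ed) (hv : ‖v‖ = 1) (z : Ed) :
    reflV v hv z = z - (2 * ⟪z, v⟫) • v := rfl

/-- The affine reflection `z ↦ R z + t v` (reflection across the hyperplane `⟪z,v⟫ = t/2`). -/
noncomputable def sigmaH (v : Ed) (hv : ‖v‖ = 1) (t : ℝ) : Ed ≃ₜ Ed :=
  (reflV v hv).toHomeomorph.trans (Homeomorph.addRight (t • v))

noncomputable def sigmaF (v : Ed) (hv : ‖v‖ = 1) (t : ℝ) : Ed → Ed := sigmaH v hv t

lemma sigmaF_apply (v : Ed) (hv : ‖v‖ = 1) (t : ℝ) (z : Ed) :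
    sigmaF v hv t z = z + (t - 2 * ⟪z, v⟫) • v := by
  show reflV v hv z + t • v = _
  rw [reflV_apply]
  module

lemma continuous_sigmaF (v : Ed) (hv : ‖v‖ = 1) (t : ℝ) :
    Continuous (sigmaF v hv t) := (sigmaH v hv t).continuous

lemma measurableEmbedding_sigmaF (v : Ed) (hv : ‖v‖ = 1) (t : ℝ) :
    MeasurableEmbedding (sigmaF v hv t) := (sigmaH v hv t).measurableEmbedding

lemma measurePreserving_sigmaF (v : Ed) (hv : ‖v‖ = 1) (t : ℝ) :
    MeasurePreserving (sigmaF v hv t) volume volume := by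
  have h1 : MeasurePreserving (fun z : Ed => z + t • v) volume volume :=
    measurePreserving_add_right volume (t • v)
  exact h1.comp (reflV v hv).measurePreserving

lemma inner_sigmaF (v : Ed) (hv : ‖v‖ = 1) (t : ℝ) (z : Ed) :
    ⟪sigmaF v hv t z, v⟫ = t - ⟪z, v⟫ := by
  have hvv : ⟪v, v⟫ = 1 := by rw [real_inner_self_eq_norm_sq, hv]; norm_num
  rw [sigmaF_apply, inner_add_left, real_inner_smul_left, hvv]
  ring

lemma norm_sq_sigmaF (v : Ed) (hv : ‖v‖ = 1) (t : ℝ) (z : Ed) :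
    ‖sigmaF v hv t z‖^2 = ‖z‖^2 + t * (t - 2 * ⟪z, v⟫) := by
  have hvv : ⟪v, v⟫ = 1 := by rw [real_inner_self_eq_norm_sq, hv]; norm_num
  rw [sigmaF_apply, norm_add_sq_real, real_inner_smul_right]
  have hnv : ‖(t - 2 * ⟪z, v⟫) • v‖^2 = (t - 2 * ⟪z, v⟫)^2 := by
    rw [norm_smul, hv, mul_one, Real.norm_eq_abs, sq_abs]
  rw [hnv]; ring

lemma norm_sigmaF_sub (v : Ed) (hv : ‖v‖ = 1) (t : ℝ) (a b : Ed) :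
    ‖sigmaF v hv t a - sigmaF v hv t b‖ = ‖a - b‖ := by
  have h : sigmaF v hv t a - sigmaF v hv t b = reflV v hv (a - b) := by
    show (reflV v hv a + t • v) - (reflV v hv b + t • v) = _
    rw [(reflV v hv).map_sub]
    abel
  rw [h, (reflV v hv).norm_map]

lemma sigmaF_smul (v : Ed) (hv : ‖v‖ = 1) (t : ℝ) (a : ℝ) :
    sigmaF v hv t (a • v) = (t - a) • v := by
  have hvv : ⟪v, v⟫ = 1 := by rw [real_inner_self_eq_norm_sq, hv]; norm_num
  rw [sigmaF_apply, real_inner_smul_left, hvv]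
  module

lemma norm_sub_smul_sq (v : Ed) (hv : ‖v‖ = 1) (a : ℝ) (z : Ed) :
    ‖a • v - z‖^2 = a^2 - 2 * a * ⟪z, v⟫ + ‖z‖^2 := by
  rw [norm_sub_sq_real, norm_smul, hv, mul_one, Real.norm_eq_abs, sq_abs,
    real_inner_smul_left, real_inner_comm]
  ring


lemma integrableOn_ker_compl {q : ℝ} (hq : (n:ℝ) < q) {x : Ed} (hx : ‖x‖ < 1) :
    IntegrableOn (fun z : Ed => ‖x - z‖ ^ (-q)) (ball (0:Ed) 1)ᶜ := by
  set c : ℝ := (1 - ‖x‖) / 2 with hc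
  have hc0 : 0 < c := by
    have := norm_nonneg x
    simp only [hc]; linarith
  have hg : Integrable (fun z : Ed => c ^ (-q) * (1 + ‖z‖) ^ (-q)) := by
    refine (integrable_one_add_norm ?_).const_mul _
    rwa [finrank_euclideanSpace_fin]
  refine Integrable.mono' hg.integrableOn ?_ ?_
  · exact (Measurable.aestronglyMeasurable (by fun_prop)).restrict
  · rw [ae_restrict_iff' measurableSet_ball.compl]
    refine ae_of_all _ fun z hz => ?_
    have hz1 : 1 ≤ ‖z‖ := by
      simpa [mem_ball_zero_iff] using hz
    have hkey : c * (1 + ‖z‖) ≤ ‖x - z‖ := by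
      have h1 : ‖z‖ - ‖x‖ ≤ ‖x - z‖ := by
        rw [norm_sub_rev]; exact norm_sub_norm_le z x
      have := norm_nonneg x
      nlinarith
    have hpos : 0 < c * (1 + ‖z‖) := by positivity
    have h2 : ‖x - z‖ ^ (-q) ≤ (c * (1 + ‖z‖)) ^ (-q) :=
      rpow_le_rpow_of_nonpos hpos hkey (by linarith [(Nat.cast_nonneg n : (0:ℝ) ≤ n)])
    rw [Real.norm_eq_abs, abs_of_nonneg (rpow_nonneg (norm_nonneg _) _)]
    rwa [Real.mul_rpow hc0.le (by positivity)] at h2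

lemma integrableOn_ker_ball {q : ℝ} (hq0 : 0 ≤ q) {x : Ed} (hx : 1 < ‖x‖) :
    IntegrableOn (fun z : Ed => ‖x - z‖ ^ (-q)) (ball (0:Ed) 1) := by
  refine Measure.integrableOn_of_bounded (M := (‖x‖ - 1) ^ (-q)) measure_ball_lt_top.ne
    (Measurable.aestronglyMeasurable (by fun_prop)) ?_
  rw [ae_restrict_iff' measurableSet_ball]
  refine ae_of_all _ fun z hz => ?_
  have hz1 : ‖z‖ < 1 := mem_ball_zero_iff.mp hz
  have hkey : ‖x‖ - 1 ≤ ‖x - z‖ := by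
    have h1 : ‖x‖ - ‖z‖ ≤ ‖x - z‖ := norm_sub_norm_le x z
    linarith
  rw [Real.norm_eq_abs, abs_of_nonneg (rpow_nonneg (norm_nonneg _) _)]
  exact rpow_le_rpow_of_nonpos (by linarith) hkey (by linarith)

lemma null_hyperplane (v : Ed) (hv : ‖v‖ = 1) (m : ℝ) :
    volume {z : Ed | ⟪z, v⟫ = m} = 0 := by
  have hvv : ⟪v, v⟫ = 1 := by rw [real_inner_self_eq_norm_sq, hv]; norm_num
  have hpre : (fun z : Ed => z + m • v) ⁻¹' {z : Ed | ⟪z, v⟫ = m}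
      = {z : Ed | ⟪z, v⟫ = 0} := by
    ext z
    simp only [Set.mem_preimage, Set.mem_setOf_eq, inner_add_left, real_inner_smul_left, hvv]
    constructor <;> intro h <;> linarith
  have horth : {z : Ed | ⟪z, v⟫ = 0} = ((ℝ ∙ v)ᗮ : Submodule ℝ Ed) := by
    ext z
    simp [Submodule.mem_orthogonal_singleton_iff_inner_left, Set.mem_setOf_eq]
  have hne : ((ℝ ∙ v)ᗮ : Submodule ℝ Ed) ≠ ⊤ := by
    intro h
    have hvmem : v ∈ ((ℝ ∙ v)ᗮ : Submodule ℝ Ed) := h ▸ Submodule.mem_top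
    have h0 := Submodule.mem_orthogonal_singleton_iff_inner_left.mp hvmem
    rw [hvv] at h0
    exact one_ne_zero h0
  calc volume {z : Ed | ⟪z, v⟫ = m}
      = volume ((fun z : Ed => z + m • v) ⁻¹' {z : Ed | ⟪z, v⟫ = m}) :=
        (measure_preimage_add_right volume (m • v) _).symm
    _ = volume ({z : Ed | ⟪z, v⟫ = 0}) := by rw [hpre]
    _ = 0 := by rw [horth]; exact Measure.addHaar_submodule volume _ hne


lemma exists_unit_orthogonal (hn : 2 ≤ n) (v : Ed) (hv : ‖v‖ = 1) :
    ∃ w : Ed, ‖w‖ = 1 ∧ ⟪w, v⟫ = 0 := by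
  have hv0 : v ≠ 0 := by intro h; rw [h, norm_zero] at hv; norm_num at hv
  have hne : ((ℝ ∙ v)ᗮ : Submodule ℝ Ed) ≠ ⊥ := by
    rw [Ne, Submodule.orthogonal_eq_bot_iff]
    intro h
    have h1 : Module.finrank ℝ (ℝ ∙ v : Submodule ℝ Ed) = 1 := finrank_span_singleton hv0
    have h2 : Module.finrank ℝ (EuclideanSpace ℝ (Fin n)) = n := finrank_euclideanSpace_fin
    rw [h] at h1
    rw [finrank_top] at h1
    omega
  obtain ⟨w, hwmem, hw0⟩ := Submodule.exists_mem_ne_zero_of_ne_bot hne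
  have hworth : ⟪w, v⟫ = 0 := Submodule.mem_orthogonal_singleton_iff_inner_left.mp hwmem
  have hwn : 0 < ‖w‖ := norm_pos_iff.mpr hw0
  refine ⟨‖w‖⁻¹ • w, ?_, ?_⟩
  · rw [norm_smul, Real.norm_eq_abs, abs_of_nonneg (by positivity)]
    field_simp
  · rw [real_inner_smul_left, hworth, mul_zero]


lemma core_outside {q : ℝ} (hq : (n:ℝ) < q) {v : Ed} (hv : ‖v‖ = 1)
    {r s : ℝ} (hr : 1 < r) (hrs : r < s) :
    ∫ z in ball (0:Ed) 1, ‖s • v - z‖ ^ (-q) < ∫ z in ball (0:Ed) 1, ‖r • v - z‖ ^ (-q) := by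
  have hq0 : 0 < q := lt_of_le_of_lt (Nat.cast_nonneg n) hq
  have hqneg : -q < 0 := by linarith
  set B : Set Ed := ball (0:Ed) 1 with hBdef
  have hB : MeasurableSet B := measurableSet_ball
  have hnr : ‖r • v‖ = r := by
    rw [norm_smul, hv, mul_one, Real.norm_eq_abs, abs_of_pos (by linarith)]
  have hns : ‖s • v‖ = s := by
    rw [norm_smul, hv, mul_one, Real.norm_eq_abs, abs_of_pos (by linarith)]
  have hIr : IntegrableOn (fun z : Ed => ‖r • v - z‖ ^ (-q)) B :=
    integrableOn_ker_ball hq0.le (by rw [hnr]; exact hr)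
  have hIs : IntegrableOn (fun z : Ed => ‖s • v - z‖ ^ (-q)) B :=
    integrableOn_ker_ball hq0.le (by rw [hns]; linarith)
  rw [← sub_pos, ← integral_sub hIr hIs]
  set g : Ed → ℝ := fun z => ‖r • v - z‖ ^ (-q) - ‖s • v - z‖ ^ (-q) with hgdef
  have hIg : IntegrableOn g B := hIr.sub hIs
  set t : ℝ := r + s with htdef
  have ht2 : 2 < t := by simp only [htdef]; linarith
  set σ : Ed → Ed := sigmaF v hv t with hσdef
  have hφm : Measurable fun z : Ed => ⟪z, v⟫ :=
    (continuous_id.inner continuous_const).measurable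
  set Sm : Set Ed := {z : Ed | ⟪z, v⟫ < t/2} with hSmdef
  set Sp : Set Ed := {z : Ed | t/2 < ⟪z, v⟫} with hSpdef
  have hSm : MeasurableSet Sm := measurableSet_lt hφm measurable_const
  have hSp : MeasurableSet Sp := measurableSet_lt measurable_const hφm
  -- positivity of g on B ∩ Sm
  have hgpos : ∀ z : Ed, z ∈ B → ⟪z, v⟫ < t/2 → 0 < g z := by
    intro z hzB hzS
    have hz1 : ‖z‖ < 1 := mem_ball_zero_iff.mp hzB
    have h1 : 0 < ‖r • v - z‖ := by
      have h := norm_sub_norm_le (r • v) z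
      rw [hnr] at h; linarith
    have h2 : ‖r • v - z‖ < ‖s • v - z‖ := by
      apply lt_of_sq_lt_sq (norm_nonneg _)
      rw [norm_sub_smul_sq v hv, norm_sub_smul_sq v hv]
      simp only [htdef] at hzS
      nlinarith
    have h3 := rpow_lt_rpow_of_neg h1 h2 hqneg
    simp only [hgdef]; linarith
  -- reflected set
  set P : Set Ed := σ ⁻¹' (B ∩ Sp) with hPdef
  have hP : MeasurableSet P :=
    (continuous_sigmaF v hv t).measurable (hB.inter hSp)
  have hPsub : P ⊆ B ∩ Sm := by
    intro w hw
    have hw1 : σ w ∈ B := hw.1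
    have hw2 : t/2 < ⟪σ w, v⟫ := hw.2
    have hi := inner_sigmaF v hv t w
    rw [hσdef] at *
    have hφ : ⟪w, v⟫ < t/2 := by rw [hi] at hw2; linarith
    have hnsq := norm_sq_sigmaF v hv t w
    have hσn : ‖sigmaF v hv t w‖ < 1 := mem_ball_zero_iff.mp hw1
    have hwn : ‖w‖ < 1 := by
      have h0 := norm_nonneg w
      have h1 := norm_nonneg (sigmaF v hv t w)
      nlinarith
    exact ⟨mem_ball_zero_iff.mpr hwn, hφ⟩
  -- reflection identity for g
  have hfun : ∀ w : Ed, g (σ w) = - g w := by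
    intro w
    have e1 : σ (s • v) = r • v := by
      rw [hσdef, sigmaF_smul]; congr 1; simp only [htdef]; ring
    have e2 : σ (r • v) = s • v := by
      rw [hσdef, sigmaF_smul]; congr 1; simp only [htdef]; ring
    have h1 : ‖r • v - σ w‖ = ‖s • v - w‖ := by
      conv_lhs => rw [← e1, hσdef, norm_sigmaF_sub]
    have h2 : ‖s • v - σ w‖ = ‖r • v - w‖ := by
      conv_lhs => rw [← e2, hσdef, norm_sigmaF_sub]
    simp only [hgdef, h1, h2]; ring
  have htrans : ∫ z in B ∩ Sp, g z = - ∫ w in P, g w := by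
    rw [hPdef, ← (measurePreserving_sigmaF v hv t).setIntegral_preimage_emb
      (measurableEmbedding_sigmaF v hv t) g (B ∩ Sp)]
    rw [← hσdef]
    simp_rw [hfun]
    exact integral_neg _
  -- splitting the integral
  have hae : B =ᵐ[volume] ((B ∩ Sm ∪ B ∩ Sp : Set Ed)) := by
    rw [ae_eq_set]
    constructor
    · refine measure_mono_null ?_ (null_hyperplane v hv (t/2))
      intro z hz
      rcases hz with ⟨hzB, hzU⟩
      simp only [Set.mem_union, Set.mem_inter_iff, Set.mem_setOf_eq, not_or, not_and,
        not_lt, hSmdef, hSpdef] at hzU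
      have h1 := hzU.1 hzB
      have h2 := hzU.2 hzB
      exact le_antisymm h2 h1
    · have hsub : (B ∩ Sm) ∪ (B ∩ Sp) ⊆ B :=
        Set.union_subset inter_subset_left inter_subset_left
      rw [Set.diff_eq_empty.mpr hsub, measure_empty]
  have hsplit : ∫ z in B, g z = (∫ z in B ∩ Sm, g z) + ∫ z in B ∩ Sp, g z := by
    rw [setIntegral_congr_set hae]
    apply setIntegral_union
    · rw [Set.disjoint_left]
      rintro z ⟨_, h1⟩ ⟨_, h2⟩
      simp only [hSmdef, Set.mem_setOf_eq] at h1
      simp only [hSpdef, Set.mem_setOf_eq] at h2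
      linarith
    · exact hB.inter hSp
    · exact hIg.mono_set inter_subset_left
    · exact hIg.mono_set inter_subset_left
  have hsplit2 : ∫ z in B ∩ Sm, g z = (∫ z in P, g z) + ∫ z in (B ∩ Sm) \ P, g z := by
    rw [← setIntegral_union disjoint_sdiff_self_right ((hB.inter hSm).diff hP)
      (hIg.mono_set (hPsub.trans inter_subset_left))
      (hIg.mono_set (diff_subset.trans inter_subset_left)),
      Set.union_diff_cancel hPsub]
  rw [hsplit, hsplit2, htrans]
  have hfinal : 0 < ∫ z in (B ∩ Sm) \ P, g z := by
    refine (setIntegral_pos_iff_support_of_nonneg_ae ?_ ?_).2 ?_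
    · exact (ae_restrict_iff' (((hB.inter hSm).diff hP))).2
        (ae_of_all _ fun z hz => (hgpos z hz.1.1 hz.1.2).le)
    · exact hIg.mono_set (diff_subset.trans inter_subset_left)
    · -- measure of support
      set U : Set Ed := {z : Ed | ‖z‖ < 1} ∩ {z : Ed | 1 < ‖σ z‖} with hUdef
      have hUopen : IsOpen U :=
        (isOpen_lt continuous_norm continuous_const).inter
          (isOpen_lt continuous_const (continuous_sigmaF v hv t).norm)
      have hU0 : (0:Ed) ∈ U := by
        constructor
        · simp [hUdef]
        · have h0 : σ (0:Ed) = t • v := by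
            have : ((0:ℝ) • v) = (0:Ed) := zero_smul ℝ v
            rw [hσdef, ← this, sigmaF_smul, sub_zero]
          simp only [Set.mem_setOf_eq, h0, norm_smul, hv, mul_one, Real.norm_eq_abs]
          rw [abs_of_pos (by linarith)]
          linarith
      have hUsub : U ⊆ support g ∩ ((B ∩ Sm) \ P) := by
        intro z hz
        have hz1 : ‖z‖ < 1 := hz.1
        have hz2 : 1 < ‖σ z‖ := hz.2
        have hnsq := norm_sq_sigmaF v hv t z
        rw [← hσdef] at hnsq
        have hφ : ⟪z, v⟫ < t/2 := by
          by_contra hcon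
          push_neg at hcon
          have h5 : t * (t - 2 * ⟪z, v⟫) ≤ 0 := by nlinarith
          have h6 : 1 < ‖σ z‖^2 := by nlinarith
          have h7 : ‖z‖^2 < 1 := by nlinarith [norm_nonneg z]
          linarith
        have hzB : z ∈ B := mem_ball_zero_iff.mpr hz1
        have hzP : z ∉ P := by
          intro hzP
          have : ‖σ z‖ < 1 := mem_ball_zero_iff.mp hzP.1
          linarith
        exact ⟨(hgpos z hzB hφ).ne', ⟨hzB, hφ⟩, hzP⟩
      exact lt_of_lt_of_le (hUopen.measure_pos volume ⟨0, hU0⟩) (measure_mono hUsub)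
  linarith


set_option maxHeartbeats 2000000 in
lemma core_inside (hn : 2 ≤ n) {q : ℝ} (hq : (n:ℝ) < q) {v : Ed} (hv : ‖v‖ = 1)
    {r s : ℝ} (hr : 0 < r) (hrs : r < s) (hs : s < 1) :
    ∫ z in (ball (0:Ed) 1)ᶜ, ‖r • v - z‖ ^ (-q) < ∫ z in (ball (0:Ed) 1)ᶜ, ‖s • v - z‖ ^ (-q) := by
  have hq0 : 0 < q := lt_of_le_of_lt (Nat.cast_nonneg n) hq
  have hqneg : -q < 0 := by linarith
  set C : Set Ed := (ball (0:Ed) 1)ᶜ with hCdef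
  have hC : MeasurableSet C := measurableSet_ball.compl
  have hmemC : ∀ z : Ed, z ∈ C ↔ 1 ≤ ‖z‖ := by
    intro z
    rw [hCdef, Set.mem_compl_iff, mem_ball_zero_iff, not_lt]
  have hnr : ‖r • v‖ = r := by
    rw [norm_smul, hv, mul_one, Real.norm_eq_abs, abs_of_pos hr]
  have hns : ‖s • v‖ = s := by
    rw [norm_smul, hv, mul_one, Real.norm_eq_abs, abs_of_pos (by linarith)]
  have hIr : IntegrableOn (fun z : Ed => ‖r • v - z‖ ^ (-q)) C :=
    integrableOn_ker_compl hq (by rw [hnr]; linarith)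
  have hIs : IntegrableOn (fun z : Ed => ‖s • v - z‖ ^ (-q)) C :=
    integrableOn_ker_compl hq (by rw [hns]; exact hs)
  rw [← sub_neg, ← integral_sub hIr hIs]
  set g : Ed → ℝ := fun z => ‖r • v - z‖ ^ (-q) - ‖s • v - z‖ ^ (-q) with hgdef
  have hIg : IntegrableOn g C := hIr.sub hIs
  set t : ℝ := r + s with htdef
  have ht0 : 0 < t := by simp only [htdef]; linarith
  have ht2 : t < 2 := by simp only [htdef]; linarith
  set σ : Ed → Ed := sigmaF v hv t with hσdef
  have hφm : Measurable fun z : Ed => ⟪z, v⟫ :=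
    (continuous_id.inner continuous_const).measurable
  set Sm : Set Ed := {z : Ed | ⟪z, v⟫ < t/2} with hSmdef
  set Sp : Set Ed := {z : Ed | t/2 < ⟪z, v⟫} with hSpdef
  have hSm : MeasurableSet Sm := measurableSet_lt hφm measurable_const
  have hSp : MeasurableSet Sp := measurableSet_lt measurable_const hφm
  -- negativity of g on C ∩ Sp
  have hgneg : ∀ z : Ed, z ∈ C → t/2 < ⟪z, v⟫ → g z < 0 := by
    intro z hzC hzS
    have hz1 : 1 ≤ ‖z‖ := (hmemC z).mp hzC
    have h1 : 0 < ‖s • v - z‖ := by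
      have h := norm_sub_norm_le z (s • v)
      rw [hns, norm_sub_rev] at h
      linarith
    have h2 : ‖s • v - z‖ < ‖r • v - z‖ := by
      apply lt_of_sq_lt_sq (norm_nonneg _)
      rw [norm_sub_smul_sq v hv, norm_sub_smul_sq v hv]
      simp only [htdef] at hzS
      nlinarith
    have h3 := rpow_lt_rpow_of_neg h1 h2 hqneg
    simp only [hgdef]; linarith
  -- reflected set
  set P : Set Ed := σ ⁻¹' (C ∩ Sm) with hPdef
  have hP : MeasurableSet P :=
    (continuous_sigmaF v hv t).measurable (hC.inter hSm)
  have hPsub : P ⊆ C ∩ Sp := by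
    intro w hw
    have hw1 : 1 ≤ ‖σ w‖ := (hmemC _).mp hw.1
    have hw2 : ⟪σ w, v⟫ < t/2 := hw.2
    have hi := inner_sigmaF v hv t w
    rw [← hσdef] at hi
    have hφ : t/2 < ⟪w, v⟫ := by rw [hi] at hw2; linarith
    have hnsq := norm_sq_sigmaF v hv t w
    rw [← hσdef] at hnsq
    have hwn : 1 ≤ ‖w‖ := by
      by_contra hcon
      push_neg at hcon
      have h5 : t * (t - 2 * ⟪w, v⟫) < 0 :=
        mul_neg_of_pos_of_neg ht0 (by linarith)
      have h6 : 1 ≤ ‖σ w‖^2 := by nlinarith [norm_nonneg (σ w)]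
      have h7 : ‖w‖^2 < 1 := by nlinarith [norm_nonneg w]
      linarith
    exact ⟨(hmemC w).mpr hwn, hφ⟩
  -- reflection identity for g
  have hfun : ∀ w : Ed, g (σ w) = - g w := by
    intro w
    have e1 : σ (s • v) = r • v := by
      rw [hσdef, sigmaF_smul]; congr 1; simp only [htdef]; ring
    have e2 : σ (r • v) = s • v := by
      rw [hσdef, sigmaF_smul]; congr 1; simp only [htdef]; ring
    have h1 : ‖r • v - σ w‖ = ‖s • v - w‖ := by
      conv_lhs => rw [← e1, hσdef, norm_sigmaF_sub]
    have h2 : ‖s • v - σ w‖ = ‖r • v - w‖ := by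
      conv_lhs => rw [← e2, hσdef, norm_sigmaF_sub]
    simp only [hgdef, h1, h2]; ring
  have htrans : ∫ z in C ∩ Sm, g z = - ∫ w in P, g w := by
    rw [hPdef, ← (measurePreserving_sigmaF v hv t).setIntegral_preimage_emb
      (measurableEmbedding_sigmaF v hv t) g (C ∩ Sm)]
    rw [← hσdef]
    simp_rw [hfun]
    exact integral_neg _
  -- splitting the integral
  have hae : C =ᵐ[volume] ((C ∩ Sm ∪ C ∩ Sp : Set Ed)) := by
    rw [ae_eq_set]
    constructor
    · refine measure_mono_null ?_ (null_hyperplane v hv (t/2))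
      intro z hz
      rcases hz with ⟨hzC, hzU⟩
      simp only [Set.mem_union, Set.mem_inter_iff, Set.mem_setOf_eq, not_or, not_and,
        not_lt, hSmdef, hSpdef] at hzU
      have h1 := hzU.1 hzC
      have h2 := hzU.2 hzC
      exact le_antisymm h2 h1
    · have hsub : (C ∩ Sm) ∪ (C ∩ Sp) ⊆ C :=
        Set.union_subset inter_subset_left inter_subset_left
      rw [Set.diff_eq_empty.mpr hsub, measure_empty]
  have hsplit : ∫ z in C, g z = (∫ z in C ∩ Sm, g z) + ∫ z in C ∩ Sp, g z := by
    rw [setIntegral_congr_set hae]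
    apply setIntegral_union
    · rw [Set.disjoint_left]
      rintro z ⟨_, h1⟩ ⟨_, h2⟩
      simp only [hSmdef, Set.mem_setOf_eq] at h1
      simp only [hSpdef, Set.mem_setOf_eq] at h2
      linarith
    · exact hC.inter hSp
    · exact hIg.mono_set inter_subset_left
    · exact hIg.mono_set inter_subset_left
  have hsplit2 : ∫ z in C ∩ Sp, g z = (∫ z in P, g z) + ∫ z in (C ∩ Sp) \ P, g z := by
    rw [← setIntegral_union disjoint_sdiff_self_right ((hC.inter hSp).diff hP)
      (hIg.mono_set (hPsub.trans inter_subset_left))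
      (hIg.mono_set (diff_subset.trans inter_subset_left)),
      Set.union_diff_cancel hPsub]
  rw [hsplit, hsplit2, htrans]
  have hfinal : ∫ z in (C ∩ Sp) \ P, g z < 0 := by
    have hpos : 0 < ∫ z in (C ∩ Sp) \ P, (fun z => - g z) z := by
      refine (setIntegral_pos_iff_support_of_nonneg_ae ?_ ?_).2 ?_
      · exact (ae_restrict_iff' (((hC.inter hSp)).diff hP)).2
          (ae_of_all _ fun z hz => neg_nonneg.mpr (hgneg z hz.1.1 hz.1.2).le)
      · exact (hIg.mono_set (diff_subset.trans inter_subset_left)).neg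
      · -- measure of support
        obtain ⟨w, hw1, hwv⟩ := exists_unit_orthogonal hn v hv
        have hvw : ⟪v, w⟫ = 0 := by rw [real_inner_comm]; exact hwv
        set a : ℝ := max 0 (1 - t^2) with hadef
        have ha0 : 0 ≤ a := le_max_left _ _
        have ha1 : a < 1 := by
          apply max_lt one_pos
          nlinarith
        have ha2 : 1 - t^2 ≤ a := le_max_right _ _
        set b : ℝ := Real.sqrt ((a+1)/2) with hbdef
        have hb2 : b^2 = (a+1)/2 := Real.sq_sqrt (by linarith)
        have hb0 : 0 ≤ b := Real.sqrt_nonneg _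
        have hb1 : b < 1 := by nlinarith
        set z₀ : Ed := t • v + b • w with hz₀def
        have hφz : ⟪z₀, v⟫ = t := by
          have hvv : ⟪v, v⟫ = 1 := by rw [real_inner_self_eq_norm_sq, hv]; norm_num
          rw [hz₀def, inner_add_left, real_inner_smul_left, real_inner_smul_left, hvv, hwv]
          ring
        have hσz : σ z₀ = b • w := by
          rw [hσdef, sigmaF_apply, hφz, hz₀def]
          module
        have hσzn : ‖σ z₀‖ < 1 := by
          rw [hσz, norm_smul, hw1, mul_one, Real.norm_eq_abs, abs_of_nonneg hb0]
          exact hb1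
        have hz₀n : 1 < ‖z₀‖ := by
          have hsq : ‖z₀‖^2 = t^2 + b^2 := by
            rw [hz₀def, norm_add_sq_real, real_inner_smul_left, real_inner_smul_right, hvw]
            have e1 : ‖t • v‖^2 = t^2 := by
              rw [norm_smul, hv, mul_one, Real.norm_eq_abs, sq_abs]
            have e2 : ‖b • w‖^2 = b^2 := by
              rw [norm_smul, hw1, mul_one, Real.norm_eq_abs, sq_abs]
            rw [e1, e2]; ring
          nlinarith [norm_nonneg z₀]
        set U : Set Ed := {z : Ed | 1 < ‖z‖} ∩ {z : Ed | ‖σ z‖ < 1} with hUdef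
        have hUopen : IsOpen U :=
          (isOpen_lt continuous_const continuous_norm).inter
            (isOpen_lt (continuous_sigmaF v hv t).norm continuous_const)
        have hU0 : z₀ ∈ U := ⟨hz₀n, hσzn⟩
        have hUsub : U ⊆ support (fun z => - g z) ∩ ((C ∩ Sp) \ P) := by
          intro z hz
          have hz1 : 1 < ‖z‖ := hz.1
          have hz2 : ‖σ z‖ < 1 := hz.2
          have hnsq := norm_sq_sigmaF v hv t z
          rw [← hσdef] at hnsq
          have hφ : t/2 < ⟪z, v⟫ := by
            by_contra hcon
            push_neg at hcon
            have h5 : 0 ≤ t * (t - 2 * ⟪z, v⟫) :=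
              mul_nonneg ht0.le (by linarith)
            have h6 : 1 < ‖z‖^2 := by nlinarith
            have h7 : ‖σ z‖^2 < 1 := by nlinarith [norm_nonneg (σ z)]
            linarith
          have hzC : z ∈ C := (hmemC z).mpr hz1.le
          have hzP : z ∉ P := by
            intro hzP
            have h8 : 1 ≤ ‖σ z‖ := (hmemC _).mp hzP.1
            linarith
          refine ⟨?_, ⟨hzC, hφ⟩, hzP⟩
          simp only [mem_support, ne_eq, neg_eq_zero]
          exact (hgneg z hzC hφ).ne
        exact lt_of_lt_of_le (hUopen.measure_pos volume ⟨z₀, hU0⟩) (measure_mono hUsub)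
    rw [integral_neg] at hpos
    linarith
  linarith


lemma repr_inside {q : ℝ} (hq : (n:ℝ) < q) {x : Ed} (hx : ‖x‖ < 1) :
    Integrable (fun y : Ed =>
      ((ball (0:Ed) 1).indicator (fun _ => (1:ℝ)) x -
        (ball (0:Ed) 1).indicator (fun _ => (1:ℝ)) (x - y)) * ‖y‖ ^ (-q)) ∧
    (∫ y : Ed, ((ball (0:Ed) 1).indicator (fun _ => (1:ℝ)) x -
        (ball (0:Ed) 1).indicator (fun _ => (1:ℝ)) (x - y)) * ‖y‖ ^ (-q))
      = ∫ z in (ball (0:Ed) 1)ᶜ, ‖x - z‖ ^ (-q) := by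
  have hCm : MeasurableSet ((ball (0:Ed) 1)ᶜ : Set Ed) := measurableSet_ball.compl
  set G : Ed → ℝ := ((ball (0:Ed) 1)ᶜ : Set Ed).indicator (fun z => ‖x - z‖ ^ (-q)) with hGdef
  have hxB : (ball (0:Ed) 1).indicator (fun _ => (1:ℝ)) x = 1 :=
    Set.indicator_of_mem (mem_ball_zero_iff.mpr hx) _
  have hFG : ∀ y : Ed, ((ball (0:Ed) 1).indicator (fun _ => (1:ℝ)) x -
      (ball (0:Ed) 1).indicator (fun _ => (1:ℝ)) (x - y)) * ‖y‖ ^ (-q) = G (x - y) := by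
    intro y
    rw [hxB]
    by_cases hy : x - y ∈ ball (0:Ed) 1
    · rw [hGdef, Set.indicator_of_mem hy, Set.indicator_of_notMem (by simpa using hy)]
      ring
    · rw [hGdef, Set.indicator_of_notMem hy, Set.indicator_of_mem (Set.mem_compl hy)]
      rw [sub_sub_cancel]
      ring
  have hFeq : (fun y : Ed => ((ball (0:Ed) 1).indicator (fun _ => (1:ℝ)) x -
      (ball (0:Ed) 1).indicator (fun _ => (1:ℝ)) (x - y)) * ‖y‖ ^ (-q))
      = fun y => G (x - y) := funext hFG
  have hG : Integrable G := (integrable_indicator_iff hCm).2 (integrableOn_ker_compl hq hx)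
  constructor
  · rw [hFeq]
    exact (integrable_comp_sub_left G x).2 hG
  · rw [hFeq, integral_sub_left_eq_self G volume x, hGdef, integral_indicator hCm]

lemma repr_outside {q : ℝ} (hq0 : 0 ≤ q) {x : Ed} (hx : 1 < ‖x‖) :
    Integrable (fun y : Ed =>
      ((ball (0:Ed) 1).indicator (fun _ => (1:ℝ)) x -
        (ball (0:Ed) 1).indicator (fun _ => (1:ℝ)) (x - y)) * ‖y‖ ^ (-q)) ∧
    (∫ y : Ed, ((ball (0:Ed) 1).indicator (fun _ => (1:ℝ)) x -
        (ball (0:Ed) 1).indicator (fun _ => (1:ℝ)) (x - y)) * ‖y‖ ^ (-q))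
      = - ∫ z in ball (0:Ed) 1, ‖x - z‖ ^ (-q) := by
  have hBm : MeasurableSet (ball (0:Ed) 1 : Set Ed) := measurableSet_ball
  set G : Ed → ℝ := fun z => - (ball (0:Ed) 1).indicator (fun z => ‖x - z‖ ^ (-q)) z with hGdef
  have hxB : (ball (0:Ed) 1).indicator (fun _ => (1:ℝ)) x = 0 :=
    Set.indicator_of_notMem (by rw [mem_ball_zero_iff]; exact not_lt.mpr hx.le) _
  have hFG : ∀ y : Ed, ((ball (0:Ed) 1).indicator (fun _ => (1:ℝ)) x -
      (ball (0:Ed) 1).indicator (fun _ => (1:ℝ)) (x - y)) * ‖y‖ ^ (-q) = G (x - y) := by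
    intro y
    rw [hxB]
    by_cases hy : x - y ∈ ball (0:Ed) 1
    · rw [hGdef]
      simp only
      rw [Set.indicator_of_mem hy, Set.indicator_of_mem hy, sub_sub_cancel]
      ring
    · rw [hGdef]
      simp only
      rw [Set.indicator_of_notMem hy, Set.indicator_of_notMem hy]
      ring
  have hFeq : (fun y : Ed => ((ball (0:Ed) 1).indicator (fun _ => (1:ℝ)) x -
      (ball (0:Ed) 1).indicator (fun _ => (1:ℝ)) (x - y)) * ‖y‖ ^ (-q))
      = fun y => G (x - y) := funext hFG
  have hG : Integrable G :=
    ((integrable_indicator_iff hBm).2 (integrableOn_ker_ball hq0 hx)).neg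
  constructor
  · rw [hFeq]
    exact (integrable_comp_sub_left G x).2 hG
  · rw [hFeq, integral_sub_left_eq_self G volume x, hGdef, integral_neg, integral_indicator hBm]


lemma setIntegral_ball_pos {q : ℝ} (hq0 : 0 ≤ q) {x : Ed} (hx : 1 < ‖x‖) :
    0 < ∫ z in ball (0:Ed) 1, ‖x - z‖ ^ (-q) := by
  refine (setIntegral_pos_iff_support_of_nonneg_ae ?_ ?_).2 ?_
  · exact ae_of_all _ fun z => rpow_nonneg (norm_nonneg _) _
  · exact integrableOn_ker_ball hq0 hx
  · refine lt_of_lt_of_le (measure_ball_pos volume (0:Ed) one_pos) (measure_mono ?_)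
    intro z hz
    have hz1 : ‖z‖ < 1 := mem_ball_zero_iff.mp hz
    have h1 : 0 < ‖x - z‖ := by
      have h := norm_sub_norm_le x z
      linarith
    exact ⟨(rpow_pos_of_pos h1 _).ne', hz⟩

lemma setIntegral_compl_pos (hn : 1 ≤ n) {q : ℝ} (hq : (n:ℝ) < q) {x : Ed} (hx : ‖x‖ < 1) :
    0 < ∫ z in (ball (0:Ed) 1)ᶜ, ‖x - z‖ ^ (-q) := by
  refine (setIntegral_pos_iff_support_of_nonneg_ae ?_ ?_).2 ?_
  · exact ae_of_all _ fun z => rpow_nonneg (norm_nonneg _) _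
  · exact integrableOn_ker_compl hq hx
  · set u : Ed := EuclideanSpace.single (⟨0, by omega⟩ : Fin n) (1:ℝ) with hudef
    have hu : ‖u‖ = 1 := by rw [hudef, EuclideanSpace.norm_single, norm_one]
    set c : Ed := (3:ℝ) • u with hcdef
    have hc : ‖c‖ = 3 := by
      rw [hcdef, norm_smul, hu, mul_one, Real.norm_eq_abs, abs_of_pos]; norm_num
    refine lt_of_lt_of_le (measure_ball_pos volume c one_pos) (measure_mono ?_)
    intro z hz
    have hz1 : ‖z - c‖ < 1 := by rwa [mem_ball_iff_norm] at hz
    have hz2 : 2 < ‖z‖ := by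
      have h := norm_sub_norm_le c z
      rw [norm_sub_rev] at hz1
      linarith
    have h1 : 0 < ‖x - z‖ := by
      have h := norm_sub_norm_le z x
      rw [norm_sub_rev]
      linarith
    refine ⟨(rpow_pos_of_pos h1 _).ne', ?_⟩
    rw [Set.mem_compl_iff, mem_ball_zero_iff, not_lt]
    linarith

lemma radial_eq (p : ℝ) {x x' : Ed} (h : ‖x‖ = ‖x'‖) :
    (∫ y : Ed, ((ball (0:Ed) 1).indicator (fun _ => (1:ℝ)) x -
        (ball (0:Ed) 1).indicator (fun _ => (1:ℝ)) (x - y)) * ‖y‖ ^ p)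
    = ∫ y : Ed, ((ball (0:Ed) 1).indicator (fun _ => (1:ℝ)) x' -
        (ball (0:Ed) 1).indicator (fun _ => (1:ℝ)) (x' - y)) * ‖y‖ ^ p := by
  set e : Ed ≃ₗᵢ[ℝ] Ed := Submodule.reflection (ℝ ∙ (x - x'))ᗮ with hedef
  have he : e x = x' := Submodule.reflection_sub h
  rw [← e.measurePreserving.integral_comp e.toHomeomorph.measurableEmbedding
    (fun y => ((ball (0:Ed) 1).indicator (fun _ => (1:ℝ)) x' -
        (ball (0:Ed) 1).indicator (fun _ => (1:ℝ)) (x' - y)) * ‖y‖ ^ p)]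
  congr 1
  funext y
  have h1 : (ball (0:Ed) 1).indicator (fun _ => (1:ℝ)) x
      = (ball (0:Ed) 1).indicator (fun _ => (1:ℝ)) x' := by
    by_cases hxb : x ∈ ball (0:Ed) 1
    · rw [Set.indicator_of_mem hxb, Set.indicator_of_mem]
      rw [mem_ball_zero_iff] at hxb ⊢
      rwa [← h]
    · rw [Set.indicator_of_notMem hxb, Set.indicator_of_notMem]
      rw [mem_ball_zero_iff] at hxb ⊢
      rwa [← h]
  have h2 : (ball (0:Ed) 1).indicator (fun _ => (1:ℝ)) (x' - e y)
      = (ball (0:Ed) 1).indicator (fun _ => (1:ℝ)) (x - y) := by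
    have hxy : x' - e y = e (x - y) := by rw [map_sub, he]
    by_cases hb : x - y ∈ ball (0:Ed) 1
    · rw [Set.indicator_of_mem hb, Set.indicator_of_mem]
      rw [hxy, mem_ball_zero_iff, e.norm_map]
      rwa [mem_ball_zero_iff] at hb
    · rw [Set.indicator_of_notMem hb, Set.indicator_of_notMem]
      rw [hxy, mem_ball_zero_iff, e.norm_map]
      rwa [mem_ball_zero_iff] at hb
  rw [h1, h2, e.norm_map]

end FracLapAux

open FracLapAux in
/-- Properties of `j = (−Δ)^{α/2} 𝟙_{B₁}`: it is radial, positive inside the ball,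
negative outside, and increasing in `r` on `(0,1)` and on `(1,∞)`. -/
theorem fracLap_indicator_ball_props (d : ℕ) (hd : 2 ≤ d) (α : ℝ) (hα : α ∈ Set.Ioo (0:ℝ) 2)
    (j : EuclideanSpace ℝ (Fin d) → ℝ)
    (hj : ∀ x : EuclideanSpace ℝ (Fin d), ‖x‖ ≠ 1 →
      j x = fracLapConst d α *
        ∫ y : EuclideanSpace ℝ (Fin d),
          ((Metric.ball (0 : EuclideanSpace ℝ (Fin d)) 1).indicator (fun _ => (1:ℝ)) x -
            (Metric.ball (0 : EuclideanSpace ℝ (Fin d)) 1).indicator (fun _ => (1:ℝ)) (x - y)) *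
          ‖y‖ ^ (-(d : ℝ) - α)) :
    (∀ x : EuclideanSpace ℝ (Fin d), ‖x‖ ≠ 1 →
      Integrable (fun y : EuclideanSpace ℝ (Fin d) =>
        ((Metric.ball (0 : EuclideanSpace ℝ (Fin d)) 1).indicator (fun _ => (1:ℝ)) x -
          (Metric.ball (0 : EuclideanSpace ℝ (Fin d)) 1).indicator (fun _ => (1:ℝ)) (x - y)) *
        ‖y‖ ^ (-(d : ℝ) - α))) ∧
    (∀ x x' : EuclideanSpace ℝ (Fin d), ‖x‖ ≠ 1 → ‖x‖ = ‖x'‖ → j x = j x') ∧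
    (∀ x : EuclideanSpace ℝ (Fin d), 0 < ‖x‖ → ‖x‖ < 1 → 0 < j x) ∧
    (∀ x : EuclideanSpace ℝ (Fin d), 1 < ‖x‖ → j x < 0) ∧
    (∀ x y : EuclideanSpace ℝ (Fin d), 0 < ‖x‖ → ‖x‖ < ‖y‖ → ‖y‖ < 1 → j x < j y) ∧
    (∀ x y : EuclideanSpace ℝ (Fin d), 1 < ‖x‖ → ‖x‖ < ‖y‖ → j x < j y) := by
  obtain ⟨hα0, hα2⟩ := hα
  have hdr : (0:ℝ) ≤ (d:ℝ) := Nat.cast_nonneg d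
  have hq : ((d:ℕ):ℝ) < (d:ℝ) + α := by linarith
  have hexp : -(d:ℝ) - α = -((d:ℝ) + α) := by ring
  have hq0 : (0:ℝ) ≤ (d:ℝ) + α := by linarith
  have hd1 : 1 ≤ d := by omega
  have hA : 0 < fracLapConst d α := by
    unfold fracLapConst
    apply div_pos
    · exact mul_pos (rpow_pos_of_pos two_pos α)
        (Real.Gamma_pos_of_pos (by linarith))
    · refine mul_pos (rpow_pos_of_pos pi_pos _) ?_
      rw [abs_pos]
      apply Real.Gamma_ne_zero
      intro m hm
      rcases Nat.eq_zero_or_pos m with h0 | h1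
      · rw [h0] at hm
        simp only [Nat.cast_zero, neg_zero] at hm
        linarith
      · have hm1 : (1:ℝ) ≤ (m:ℝ) := by exact_mod_cast h1
        linarith
  have hrad : ∀ x x' : EuclideanSpace ℝ (Fin d), ‖x‖ ≠ 1 → ‖x‖ = ‖x'‖ → j x = j x' := by
    intro x x' hx h
    rw [hj x hx, hj x' (by rw [← h]; exact hx)]
    congr 1
    exact radial_eq _ h
  have hjin : ∀ x : EuclideanSpace ℝ (Fin d), ‖x‖ < 1 →
      j x = fracLapConst d α *
        ∫ z in (ball (0:EuclideanSpace ℝ (Fin d)) 1)ᶜ, ‖x - z‖ ^ (-((d:ℝ)+α)) := by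
    intro x hx1
    rw [hj x (ne_of_lt hx1)]
    congr 1
    simp only [hexp]
    exact (repr_inside hq hx1).2
  have hjout : ∀ x : EuclideanSpace ℝ (Fin d), 1 < ‖x‖ →
      j x = fracLapConst d α *
        -(∫ z in ball (0:EuclideanSpace ℝ (Fin d)) 1, ‖x - z‖ ^ (-((d:ℝ)+α))) := by
    intro x hx1
    rw [hj x (ne_of_gt hx1)]
    congr 1
    simp only [hexp]
    exact (repr_outside hq0 hx1).2
  refine ⟨?_, hrad, ?_, ?_, ?_, ?_⟩
  · intro x hx
    simp only [hexp]
    rcases lt_or_gt_of_ne hx with h | h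
    · exact (repr_inside hq h).1
    · exact (repr_outside hq0 h).1
  · intro x _ h1
    rw [hjin x h1]
    exact mul_pos hA (setIntegral_compl_pos hd1 hq h1)
  · intro x hx
    rw [hjout x hx]
    exact mul_neg_of_pos_of_neg hA (neg_lt_zero.mpr (setIntegral_ball_pos hq0 hx))
  · intro x y h0 hxy hy1
    have hy0 : 0 < ‖y‖ := lt_trans h0 hxy
    have hx1 : ‖x‖ < 1 := lt_trans hxy hy1
    set v : EuclideanSpace ℝ (Fin d) := ‖y‖⁻¹ • y with hvdef
    have hv : ‖v‖ = 1 := by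
      rw [hvdef, norm_smul, Real.norm_eq_abs, abs_of_pos (by positivity)]
      field_simp
    have hyv : ‖y‖ • v = y := by rw [hvdef, smul_inv_smul₀ (ne_of_gt hy0)]
    have hxn : ‖(‖x‖ : ℝ) • v‖ = ‖x‖ := by
      rw [norm_smul, hv, mul_one, Real.norm_eq_abs, abs_of_pos h0]
    have hcore := core_inside hd hq hv h0 hxy hy1
    rw [hyv] at hcore
    have e1 : j x = j (‖x‖ • v) := hrad x _ (ne_of_lt hx1) hxn.symm
    rw [e1, hjin _ (by rw [hxn]; exact hx1), hjin y hy1]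
    exact mul_lt_mul_of_pos_left hcore hA
  · intro x y hx hxy
    have hy : 1 < ‖y‖ := lt_trans hx hxy
    have hy0 : 0 < ‖y‖ := by linarith
    set v : EuclideanSpace ℝ (Fin d) := ‖y‖⁻¹ • y with hvdef
    have hv : ‖v‖ = 1 := by
      rw [hvdef, norm_smul, Real.norm_eq_abs, abs_of_pos (by positivity)]
      field_simp
    have hyv : ‖y‖ • v = y := by rw [hvdef, smul_inv_smul₀ (ne_of_gt hy0)]
    have hxn : ‖(‖x‖ : ℝ) • v‖ = ‖x‖ := by
      rw [norm_smul, hv, mul_one, Real.norm_eq_abs, abs_of_pos (by linarith)]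
    have hcore := core_outside hq hv hx hxy
    rw [hyv] at hcore
    have e1 : j x = j (‖x‖ • v) := hrad x _ (ne_of_gt hx) hxn.symm
    rw [e1, hjout _ (by rw [hxn]; exact hx), hjout y hy]
    exact mul_lt_mul_of_pos_left (neg_lt_neg hcore) hA
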